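/- Let T be a bounded linear operator on a complex Banach space with rich point spectrum, and suppose that σ_p(T) = D(r, r) (the open disc with center r and radius r) for some r > 0. If λ ∈ ℂ is an extended eigenvalue of T, then λ is real and 0 < λ ≤ 1. -/

import Mathlib

open Metric

/-- The point spectrum of a bounded linear operator. -/
def pointSpectrum {E : Type*} [NormedAddCommGroup E] [NormedSpace ℂ E]
    (T : E →L[ℂ] E) : Set ℂ :=
  {z : ℂ | ∃ f : E, f ≠ 0 ∧ T f = z • f}

/-- An operator has rich point spectrum if the interior of its point spectrum is
nonempty and for every open disc contained in the point spectrum, the union of the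
corresponding eigenspaces has dense linear span. -/
def HasRichPointSpectrum {E : Type*} [NormedAddCommGroup E] [NormedSpace ℂ E]
    (T : E →L[ℂ] E) : Prop :=
  (interior (pointSpectrum T)).Nonempty ∧
    ∀ (c : ℂ) (r : ℝ), 0 < r → Metric.ball c r ⊆ pointSpectrum T →
      Dense (↑(Submodule.span ℂ {f : E | ∃ z ∈ Metric.ball c r, T f = z • f}) : Set E)


lemma norm_probe (l a : ℂ) (hl : l ≠ 0) (ha : a ≠ 0) :
    ∃ u : ℂ, ‖u‖ = 1 ∧ ‖a + l * u‖ = ‖a‖ + ‖l‖ := by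
  have hna : (0:ℝ) < ‖a‖ := norm_pos_iff.mpr ha
  have hnl : (0:ℝ) < ‖l‖ := norm_pos_iff.mpr hl
  have hca : (‖a‖ : ℂ) ≠ 0 := by exact_mod_cast hna.ne'
  have hcl : (‖l‖ : ℂ) ≠ 0 := by exact_mod_cast hnl.ne'
  refine ⟨(‖l‖ : ℂ) * a / ((‖a‖ : ℂ) * l), ?_, ?_⟩
  · rw [norm_div, norm_mul, norm_mul, Complex.norm_real, Complex.norm_real,
      Real.norm_of_nonneg hna.le, Real.norm_of_nonneg hnl.le, mul_comm]
    exact div_self (by positivity)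
  · have hc1 : l * ((‖l‖ : ℂ) * a / ((‖a‖ : ℂ) * l))
        = (l * l⁻¹) * ((‖l‖ : ℂ) * a / (‖a‖ : ℂ)) := by ring
    rw [mul_inv_cancel₀ hl, one_mul] at hc1
    have hc2 : a * (((‖a‖ : ℂ)) + ((‖l‖ : ℂ))) / (‖a‖ : ℂ)
        = ((‖a‖ : ℂ) * (‖a‖ : ℂ)⁻¹) * a + (‖l‖ : ℂ) * a / (‖a‖ : ℂ) := by ring
    rw [mul_inv_cancel₀ hca, one_mul] at hc2
    have h2 : a + l * ((‖l‖ : ℂ) * a / ((‖a‖ : ℂ) * l))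
        = a * (((‖a‖ + ‖l‖ : ℝ)) : ℂ) / (‖a‖ : ℂ) := by
      rw [hc1]
      push_cast
      rw [hc2]
    rw [h2, norm_div, norm_mul, Complex.norm_real, Complex.norm_real,
      Real.norm_of_nonneg hna.le, Real.norm_of_nonneg (by positivity : (0:ℝ) ≤ ‖a‖ + ‖l‖)]
    rw [mul_comm, mul_div_assoc, div_self hna.ne', mul_one]

lemma helper_arith (l : ℂ) (hl0 : l ≠ 0)
    (h : ∀ u : ℂ, ‖u‖ = 1 → ‖(l - 1) + l * u‖ ≤ 1) :
    l.im = 0 ∧ 0 < l.re ∧ l.re ≤ 1 := by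
  have key : ‖l - 1‖ + ‖l‖ ≤ 1 := by
    by_cases ha : l - 1 = 0
    · have hl1 : l = 1 := by linear_combination ha
      simp [ha, hl1]
    · obtain ⟨u, hu, hval⟩ := norm_probe l (l - 1) hl0 ha
      rw [← hval]
      exact h u hu
  have h1 : 1 - l.re ≤ ‖l - 1‖ := by
    have h' := Complex.abs_re_le_norm (l - 1)
    have hre : (l - 1).re = l.re - 1 := by simp
    rw [hre] at h'
    cases abs_cases (l.re - 1) with
    | inl h'' => linarith [h''.1]
    | inr h'' => linarith [h''.1]
  have h2 : l.re ≤ ‖l‖ := by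
    have h' := Complex.abs_re_le_norm l
    exact (le_abs_self l.re).trans h'
  have hnl : (0:ℝ) < ‖l‖ := norm_pos_iff.mpr hl0
  have heq : ‖l‖ = l.re := by linarith
  have hsq : ‖l‖ ^ 2 = l.re ^ 2 + l.im ^ 2 := by
    rw [Complex.sq_norm, Complex.normSq_apply]; ring
  have him : l.im = 0 := by nlinarith [sq_nonneg l.im]
  exact ⟨him, by linarith, by nlinarith [norm_nonneg (l - 1)]⟩

theorem stmt1 {E : Type*} [NormedAddCommGroup E] [NormedSpace ℂ E] [CompleteSpace E]
    (T : E →L[ℂ] E) (hT : HasRichPointSpectrum T) (r : ℝ) (hr : 0 < r)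
    (hσ : pointSpectrum T = Metric.ball (r : ℂ) r) (l : ℂ)
    (hl : ∃ X : E →L[ℂ] E, X ≠ 0 ∧ T.comp X = l • (X.comp T)) :
    l.im = 0 ∧ 0 < l.re ∧ l.re ≤ 1 := by
  obtain ⟨X, hX0, hX⟩ := hl
  -- core: in every disc inside the spectrum there is z with l*z in the spectrum
  have core : ∀ (c : ℂ) (ε : ℝ), 0 < ε → ball c ε ⊆ ball (r : ℂ) r →
      ∃ z ∈ ball c ε, l * z ∈ ball (r : ℂ) r := by
    intro c ε hε hsub
    by_contra h
    push_neg at h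
    have hsub' : ball c ε ⊆ pointSpectrum T := by rw [hσ]; exact hsub
    have hdense := hT.2 c ε hε hsub'
    set S : Set E := {f : E | ∃ z ∈ ball c ε, T f = z • f} with hS_def
    have hSker : S ⊆ (LinearMap.ker (X : E →ₗ[ℂ] E) : Set E) := by
      intro f hf
      obtain ⟨z, hz, hfz⟩ := hf
      by_contra hXf
      simp only [SetLike.mem_coe, LinearMap.mem_ker] at hXf
      have heig : T (X f) = (l * z) • (X f) := by
        have h1 : T (X f) = (T.comp X) f := rfl
        rw [h1, hX]
        simp only [ContinuousLinearMap.smul_apply, ContinuousLinearMap.comp_apply]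
        rw [hfz, map_smul, smul_smul]
      have : l * z ∈ pointSpectrum T := ⟨X f, hXf, heig⟩
      rw [hσ] at this
      exact h z hz this
    have hspan : (Submodule.span ℂ S : Set E) ⊆ (LinearMap.ker (X : E →ₗ[ℂ] E) : Set E) := by
      exact_mod_cast Submodule.span_le.mpr hSker
    have hXzero : X = 0 := by
      ext f
      have hfc : f ∈ closure (Submodule.span ℂ S : Set E) := hdense f
      have hcl : closure (Submodule.span ℂ S : Set E) ⊆ (LinearMap.ker (X : E →ₗ[ℂ] E) : Set E) :=
        closure_minimal hspan (ContinuousLinearMap.isClosed_ker X)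
      have := hcl hfc
      simpa using this
    exact hX0 hXzero
  -- l ≠ 0
  have hl0 : l ≠ 0 := by
    intro h0
    obtain ⟨z, _, hlz⟩ := core (r : ℂ) r hr subset_rfl
    rw [h0, zero_mul, mem_ball, dist_comm, Complex.dist_eq] at hlz
    simp only [sub_zero, Complex.norm_real, Real.norm_eq_abs, abs_of_pos hr] at hlz
    exact lt_irrefl r hlz
  have hnl : (0:ℝ) < ‖l‖ := norm_pos_iff.mpr hl0
  -- l * (ball r r) ⊆ closedBall r r
  have hcb : ∀ z ∈ ball (r : ℂ) r, l * z ∈ closedBall (r : ℂ) r := by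
    intro z hz
    by_contra hout
    rw [mem_closedBall, not_le] at hout
    set d := dist (l * z) (r : ℂ) with hd_def
    have hzr : dist z (r : ℂ) < r := mem_ball.mp hz
    set ε := min (r - dist z (r : ℂ)) ((d - r) / ‖l‖) with hε_def
    have hε : 0 < ε := lt_min (by linarith) (div_pos (by linarith) hnl)
    have hsub : ball z ε ⊆ ball (r : ℂ) r := by
      intro w hw
      rw [mem_ball] at hw ⊢
      have h1 : dist w (r : ℂ) ≤ dist w z + dist z (r : ℂ) := dist_triangle _ _ _
      have h2 : ε ≤ r - dist z (r : ℂ) := min_le_left _ _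
      linarith
    obtain ⟨w, hw, hlw⟩ := core z ε hε hsub
    rw [mem_ball] at hw hlw
    have hdist : dist (l * z) (l * w) = ‖l‖ * dist z w := by
      rw [dist_eq_norm, dist_eq_norm, ← norm_mul, mul_sub]
    have htri : d ≤ dist (l * z) (l * w) + dist (l * w) (r : ℂ) := dist_triangle _ _ _
    have hεle : ε ≤ (d - r) / ‖l‖ := min_le_right _ _
    have hzw : dist z w < ε := by rw [dist_comm]; exact hw
    have : ‖l‖ * dist z w < d - r := by
      calc ‖l‖ * dist z w < ‖l‖ * ε := by exact mul_lt_mul_of_pos_left hzw hnl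
        _ ≤ ‖l‖ * ((d - r) / ‖l‖) := mul_le_mul_of_nonneg_left hεle hnl.le
        _ = d - r := by rw [mul_comm]; exact div_mul_cancel₀ _ hnl.ne'
    linarith [hdist, htri, hlw]
  -- extend to the closed ball by continuity
  have hcb2 : ∀ z ∈ closedBall (r : ℂ) r, l * z ∈ closedBall (r : ℂ) r := by
    intro z hz
    have hclK : IsClosed {w : ℂ | l * w ∈ closedBall (r : ℂ) r} :=
      IsClosed.preimage (continuous_const.mul continuous_id) isClosed_closedBall
    have hzc : z ∈ closure (ball (r : ℂ) r) := by
      rw [closure_ball (r : ℂ) hr.ne']; exact hz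
    exact closure_minimal hcb hclK hzc
  -- derive the unit-vector inequality and finish
  apply helper_arith l hl0
  intro u hu
  have hz : (r : ℂ) + r * u ∈ closedBall (r : ℂ) r := by
    rw [mem_closedBall, dist_eq_norm]
    simp only [add_sub_cancel_left]
    rw [norm_mul, hu, mul_one, Complex.norm_real, Real.norm_of_nonneg hr.le]
  have hd := mem_closedBall.mp (hcb2 _ hz)
  rw [dist_eq_norm] at hd
  have hrr : l * ((r : ℂ) + r * u) - r = (r : ℂ) * ((l - 1) + l * u) := by ring
  rw [hrr, norm_mul, Complex.norm_real, Real.norm_of_nonneg hr.le] at hd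
  nlinarith [norm_nonneg ((l - 1) + l * u)]
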